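/- Along any solution of the closed-loop unicycle dynamics under the forward motion control, at every state (x, θ) with (cos θ, sin θ)·(g − x) ≥ 0, the squared perpendicular goal alignment distance d_g(x,θ)² = ((−sin θ, cos θ)·(g − x))² satisfies d/dt d_g² = −2 k_ω φ sin(φ) cos(φ) ‖g − x‖² ≤ 0, where φ = atan2((−sin θ, cos θ)·(g−x), (cos θ, sin θ)·(g−x)). -/

import Mathlib

open Real Metric Set
open scoped RealInnerProductSpace

noncomputable section

abbrev E2 := EuclideanSpace ℝ (Fin 2)

/-- Unit forward direction vector of orientation `θ`. -/
def uvec (θ : ℝ) : E2 := WithLp.toLp 2 ![Real.cos θ, Real.sin θ]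

/-- Unit normal (perpendicular) vector of orientation `θ`. -/
def nvec (θ : ℝ) : E2 := WithLp.toLp 2 ![-Real.sin θ, Real.cos θ]

/-- Two-argument arctangent, `atan2 y x`. -/
def atan2 (y x : ℝ) : ℝ := Complex.arg (x + y * Complex.I)

/-- Decrease of the squared perpendicular goal alignment distance at
goal-aligned poses (Lemma: Perpendicular Goal Alignment Distance). -/
theorem stmt_2 (g : E2) (kv kω : ℝ) (hkv : 0 < kv) (hkω : 0 < kω)
    (x : ℝ → E2) (θ : ℝ → ℝ)
    (v : ℝ → ℝ) (hv : v = fun s => kv * max 0 ⟪uvec (θ s), g - x s⟫)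
    (ω : ℝ → ℝ)
    (hω : ω = fun s => kω * atan2 ⟪nvec (θ s), g - x s⟫ ⟪uvec (θ s), g - x s⟫)
    (φ : ℝ → ℝ)
    (hφ : φ = fun s => atan2 ⟪nvec (θ s), g - x s⟫ ⟪uvec (θ s), g - x s⟫)
    (hx : ∀ s, HasDerivAt x (v s • uvec (θ s)) s)
    (hθ : ∀ s, HasDerivAt θ (ω s) s) :
    ∀ t, 0 ≤ ⟪uvec (θ t), g - x t⟫ →
      HasDerivAt (fun s => (⟪nvec (θ s), g - x s⟫ : ℝ) ^ 2)
        (-2 * kω * φ t * Real.sin (φ t) * Real.cos (φ t) * ‖g - x t‖ ^ 2) t ∧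
      -2 * kω * φ t * Real.sin (φ t) * Real.cos (φ t) * ‖g - x t‖ ^ 2 ≤ 0 := by
  intro t hat
  -- component formulas
  have ha_comp : ∀ s, (⟪uvec (θ s), g - x s⟫ : ℝ)
      = Real.cos (θ s) * (g 0 - x s 0) + Real.sin (θ s) * (g 1 - x s 1) := by
    intro s
    simp [uvec, PiLp.inner_apply, RCLike.inner_apply, Fin.sum_univ_two] <;> ring
  have hb_comp : ∀ s, (⟪nvec (θ s), g - x s⟫ : ℝ)
      = (-Real.sin (θ s)) * (g 0 - x s 0) + Real.cos (θ s) * (g 1 - x s 1) := by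
    intro s
    simp [nvec, PiLp.inner_apply, RCLike.inner_apply, Fin.sum_univ_two] <;> ring
  set A := (⟪uvec (θ t), g - x t⟫ : ℝ) with hA
  set B := (⟪nvec (θ t), g - x t⟫ : ℝ) with hB
  -- norm squared
  have hnorm : ‖g - x t‖ ^ 2 = A ^ 2 + B ^ 2 := by
    rw [← real_inner_self_eq_norm_sq, hA, hB, ha_comp t, hb_comp t]
    have h1 := Real.sin_sq_add_cos_sq (θ t)
    simp only [PiLp.inner_apply, RCLike.inner_apply, Fin.sum_univ_two, PiLp.sub_apply,
      conj_trivial]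
    nlinarith [h1]
  -- φ t as complex arg
  set z : ℂ := A + B * Complex.I with hz
  have hzre : z.re = A := by simp [hz]
  have hzim : z.im = B := by simp [hz]
  have hφt : φ t = z.arg := by rw [hφ]; rfl
  -- arg in [-π/2, π/2]
  have habs : |z.arg| ≤ π / 2 := by
    rw [Complex.abs_arg_le_pi_div_two_iff, hzre]; exact hat
  have hcos : 0 ≤ Real.cos (z.arg) :=
    Real.cos_nonneg_of_mem_Icc ⟨by linarith [abs_le.1 habs |>.1], (abs_le.1 habs).2⟩
  have hφsin : 0 ≤ z.arg * Real.sin (z.arg) := by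
    rcases le_or_gt 0 (z.arg) with h | h
    · exact mul_nonneg h (Real.sin_nonneg_of_nonneg_of_le_pi h
        (by linarith [(abs_le.1 habs).2, Real.pi_pos]))
    · have hs : Real.sin (z.arg) ≤ 0 := by
        have := Real.sin_nonneg_of_nonneg_of_le_pi (x := -z.arg) (by linarith)
          (by linarith [abs_le.1 habs |>.1, Real.pi_pos])
        rw [Real.sin_neg] at this; linarith
      nlinarith
  -- key product identity : sin φ * cos φ * ‖g-x‖² = A * B
  have hkey : Real.sin (z.arg) * Real.cos (z.arg) * ‖g - x t‖ ^ 2 = A * B := by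
    rcases eq_or_ne z 0 with h0 | h0
    · have hA0 : A = 0 := by rw [← hzre, h0]; simp
      have hB0 : B = 0 := by rw [← hzim, h0]; simp
      rw [hnorm, hA0, hB0]; ring
    · have hsin := Complex.sin_arg z
      have hcosz := Complex.cos_arg h0
      have habsne : ‖z‖ ≠ 0 := norm_ne_zero_iff.mpr h0
      have habs2 : ‖z‖ ^ 2 = A ^ 2 + B ^ 2 := by
        rw [Complex.sq_norm, Complex.normSq_apply, hzre, hzim]; ring
      rw [hnorm, hsin, hcosz, hzre, hzim, ← habs2]
      field_simp
  -- derivative of components of x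
  have hxc : ∀ i : Fin 2, HasDerivAt (fun s => x s i) (v t * uvec (θ t) i) t := by
    intro i
    exact (EuclideanSpace.proj i).hasFDerivAt.comp_hasDerivAt t (hx t)
  have hu0 : uvec (θ t) 0 = Real.cos (θ t) := rfl
  have hu1 : uvec (θ t) 1 = Real.sin (θ t) := rfl
  have hsin' : HasDerivAt (fun s => Real.sin (θ s)) (Real.cos (θ t) * ω t) t :=
    (Real.hasDerivAt_sin (θ t)).comp t (hθ t)
  have hcos' : HasDerivAt (fun s => Real.cos (θ s)) (-Real.sin (θ t) * ω t) t :=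
    (Real.hasDerivAt_cos (θ t)).comp t (hθ t)
  -- derivative of b
  have hbD : HasDerivAt (fun s => (⟪nvec (θ s), g - x s⟫ : ℝ)) (-(ω t) * A) t := by
    have h1 : HasDerivAt (fun s => (-Real.sin (θ s)) * (g 0 - x s 0)
        + Real.cos (θ s) * (g 1 - x s 1))
        ((-(Real.cos (θ t) * ω t)) * (g 0 - x t 0)
          + (-Real.sin (θ t)) * (0 - v t * uvec (θ t) 0)
          + ((-Real.sin (θ t) * ω t) * (g 1 - x t 1)
            + Real.cos (θ t) * (0 - v t * uvec (θ t) 1))) t := by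
      exact ((hsin'.neg.mul ((hasDerivAt_const t (g 0)).sub (hxc 0))).add
        (hcos'.mul ((hasDerivAt_const t (g 1)).sub (hxc 1))))
    have h2 : (fun s => (⟪nvec (θ s), g - x s⟫ : ℝ))
        = fun s => (-Real.sin (θ s)) * (g 0 - x s 0) + Real.cos (θ s) * (g 1 - x s 1) :=
      funext hb_comp
    rw [h2]
    convert h1 using 1
    rw [hu0, hu1, hA, ha_comp t]
    ring
  have hderiv : HasDerivAt (fun s => (⟪nvec (θ s), g - x s⟫ : ℝ) ^ 2)
      (-2 * kω * φ t * Real.sin (φ t) * Real.cos (φ t) * ‖g - x t‖ ^ 2) t := by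
    have h2 := hbD.fun_pow 2
    simp only [← hB, pow_one, Nat.cast_ofNat, Nat.reduceSub] at h2
    refine h2.congr_deriv (Eq.symm ?_)
    have hωt : ω t = kω * φ t := by rw [hω, hφ]
    rw [hφt, hωt, hφt]
    linear_combination (-2 * kω * z.arg) * hkey
  refine ⟨hderiv, ?_⟩
  rw [hφt]
  have hn : 0 ≤ ‖g - x t‖ ^ 2 := sq_nonneg _
  nlinarith [mul_nonneg (mul_nonneg (mul_nonneg hkω.le hφsin) hcos) hn]
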